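/- The non-logarithmic data term is triconvex: for p ≥ 1, F : G → ℝ, the function 𝓔_data(u,C,L) = Σ_{k=1}^K Σ_{j∈G} uₖ(j)^p (F(j) − L(j)Cₖ)² is (i) convex in u on {u : G → ℝ^K : uₖ(j) ≥ 0 for all k,j} for fixed C ∈ ℝ^K and L : G → ℝ; (ii) convex in C on ℝ^K for fixed u with uₖ(j) ≥ 0 and fixed L; and (iii) convex in L on ℝ^G for fixed u with uₖ(j) ≥ 0 and fixed C. -/

import Mathlib

open Finset

set_option maxHeartbeats 1000000

noncomputable section

/-- A finite sum of convex functions is convex. -/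
lemma convexOn_finset_sum {E : Type*} [AddCommGroup E] [Module ℝ E]
    {ι : Type*} (t : Finset ι) {s : Set E} (hs : Convex ℝ s)
    {f : ι → E → ℝ} (hf : ∀ i ∈ t, ConvexOn ℝ s (f i)) :
    ConvexOn ℝ s (fun x => ∑ i ∈ t, f i x) := by
  classical
  induction t using Finset.induction_on with
  | empty => simpa using convexOn_const 0 hs
  | @insert a t' hi ih =>
    simp only [Finset.sum_insert hi]
    exact (hf a (Finset.mem_insert_self a t')).add
      (ih fun i hi' => hf i (Finset.mem_insert_of_mem hi'))

/-- Affine-squared terms `x ↦ c * (a - b * ℓ x)²` are convex for `c ≥ 0` and linear `ℓ`. -/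
lemma convexOn_affine_sq {E : Type*} [AddCommGroup E] [Module ℝ E]
    (ℓ : E →ₗ[ℝ] ℝ) (a b c : ℝ) (hc : 0 ≤ c) :
    ConvexOn ℝ (Set.univ : Set E) (fun x => c * (a - b * ℓ x) ^ 2) := by
  have hsq : ConvexOn ℝ (Set.univ : Set ℝ) (fun y : ℝ => y ^ 2) :=
    Even.convexOn_pow (by decide)
  let A : E →ᵃ[ℝ] ℝ :=
    AffineMap.mk' (fun x => a - b * ℓ x) (-(b • ℓ)) 0 (by
      intro x; simp; ring)
  have hA : ConvexOn ℝ (Set.univ : Set E) (fun x => (a - b * ℓ x) ^ 2) := by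
    have := hsq.comp_affineMap A
    simpa [A, AffineMap.mk', Set.preimage_univ, Function.comp_def] using this
  have := hA.smul hc
  simpa [smul_eq_mul] using this

theorem dataTerm_triconvex (d K : ℕ) (hK : 1 ≤ K) (n : Fin d → ℕ)
    (F : (∀ i, Fin (n i)) → ℝ) (p : ℝ) (hp : 1 ≤ p) :
    (∀ (C : Fin K → ℝ) (L : (∀ i, Fin (n i)) → ℝ),
      ConvexOn ℝ {u : (∀ i, Fin (n i)) → Fin K → ℝ | ∀ j k, 0 ≤ u j k}
        (fun u => ∑ k, ∑ j, u j k ^ p * (F j - L j * C k) ^ 2)) ∧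
    (∀ (u : (∀ i, Fin (n i)) → Fin K → ℝ), (∀ j k, 0 ≤ u j k) →
      ∀ L : (∀ i, Fin (n i)) → ℝ,
      ConvexOn ℝ (Set.univ : Set (Fin K → ℝ))
        (fun C => ∑ k, ∑ j, u j k ^ p * (F j - L j * C k) ^ 2)) ∧
    (∀ (u : (∀ i, Fin (n i)) → Fin K → ℝ), (∀ j k, 0 ≤ u j k) →
      ∀ C : Fin K → ℝ,
      ConvexOn ℝ (Set.univ : Set ((∀ i, Fin (n i)) → ℝ))
        (fun L => ∑ k, ∑ j, u j k ^ p * (F j - L j * C k) ^ 2)) := by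
  set S : Set ((∀ i, Fin (n i)) → Fin K → ℝ) := {u | ∀ j k, 0 ≤ u j k} with hS
  have hSconv : Convex ℝ S := by
    intro x hx y hy a b ha hb hab
    intro j k
    exact add_nonneg (mul_nonneg ha (hx j k)) (mul_nonneg hb (hy j k))
  refine ⟨?_, ?_, ?_⟩
  · intro C L
    refine convexOn_finset_sum _ hSconv fun k _ => ?_
    refine convexOn_finset_sum _ hSconv fun j _ => ?_
    -- u ↦ u j k ^ p * const
    have hrpow : ConvexOn ℝ (Set.Ici (0:ℝ)) (fun x : ℝ => x ^ p) := convexOn_rpow hp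
    let ev : ((∀ i, Fin (n i)) → Fin K → ℝ) →ₗ[ℝ] ℝ :=
      (LinearMap.proj k : (Fin K → ℝ) →ₗ[ℝ] ℝ).comp
        (LinearMap.proj j : (((∀ i, Fin (n i)) → Fin K → ℝ)) →ₗ[ℝ] (Fin K → ℝ))
    have hcomp : ConvexOn ℝ S (fun u : (∀ i, Fin (n i)) → Fin K → ℝ => u j k ^ p) := by
      have h1 := hrpow.comp_linearMap ev
      have h2 : ConvexOn ℝ (ev ⁻¹' Set.Ici 0) (fun u => u j k ^ p) := by
        simpa [ev, Function.comp_def] using h1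
      exact h2.subset (fun u hu => hu j k) hSconv
    have := hcomp.smul (sq_nonneg (F j - L j * C k))
    have heq : (fun u : (∀ i, Fin (n i)) → Fin K → ℝ =>
        (F j - L j * C k) ^ 2 • u j k ^ p)
        = fun u => u j k ^ p * (F j - L j * C k) ^ 2 := by
      funext u; simp [smul_eq_mul, mul_comm]
    rw [heq] at this
    exact this
  · intro u hu L
    refine convexOn_finset_sum _ convex_univ fun k _ => ?_
    refine convexOn_finset_sum _ convex_univ fun j _ => ?_
    exact convexOn_affine_sq (LinearMap.proj k : (Fin K → ℝ) →ₗ[ℝ] ℝ) (F j) (L j)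
      (u j k ^ p) (Real.rpow_nonneg (hu j k) p)
  · intro u hu C
    refine convexOn_finset_sum _ convex_univ fun k _ => ?_
    refine convexOn_finset_sum _ convex_univ fun j _ => ?_
    have := convexOn_affine_sq (LinearMap.proj j :
        ((∀ i, Fin (n i)) → ℝ) →ₗ[ℝ] ℝ) (F j) (C k)
      (u j k ^ p) (Real.rpow_nonneg (hu j k) p)
    simpa [mul_comm] using this
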